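/- Let θ ∈ (0, π/2) and x > 0. For z > 1 define D(x,z) := (1/(2θ)) · ( ∫_{α=−arctan x}^{θ} ((x·z + cos α)/(z + sin α) − x) dα + ∫_{α=arctan x}^{θ} ((x·z − cos α)/(z + sin α) − x) dα ). Then lim_{z→∞} (z/x) · D(x,z) = cos θ / θ. -/

import Mathlib

open Real Filter Set intervalIntegral


/-- The conditional expected one-step increment of the slope process in the
directional growth model. -/
noncomputable def growthDrift (θ x z : ℝ) : ℝ :=
  (1 / (2 * θ)) *
    ((∫ α in (-(Real.arctan x))..θ, ((x * z + Real.cos α) / (z + Real.sin α) - x)) +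
     (∫ α in (Real.arctan x)..θ, ((x * z - Real.cos α) / (z + Real.sin α) - x)))

private lemma sin_denom_pos {z : ℝ} (hz : (2:ℝ) ≤ z) (α : ℝ) : 0 < z + Real.sin α := by
  nlinarith [Real.neg_one_le_sin α]

private lemma aux_tendsto (g : ℝ → ℝ) (hg : Continuous g) (a b : ℝ) :
    Filter.Tendsto (fun z : ℝ => ∫ α in a..b, z * g α / (z + Real.sin α)) Filter.atTop
      (nhds (∫ α in a..b, g α)) := by
  apply intervalIntegral.tendsto_integral_filter_of_dominated_convergence
      (fun α => 2 * |g α|)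
  · filter_upwards [eventually_ge_atTop (2:ℝ)] with z hz
    exact (((continuous_const.mul hg).div
      (continuous_const.add Real.continuous_sin)
      (fun α => (sin_denom_pos hz α).ne')).aestronglyMeasurable).restrict
  · filter_upwards [eventually_ge_atTop (2:ℝ)] with z hz
    refine Filter.Eventually.of_forall (fun t _ => ?_)
    have h1 := sin_denom_pos hz t
    have hzpos : (0:ℝ) < z := by linarith
    rw [Real.norm_eq_abs, abs_div, abs_mul, abs_of_pos hzpos, abs_of_pos h1,
      div_le_iff₀ h1]
    nlinarith [abs_nonneg (g t), Real.neg_one_le_sin t,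
      mul_nonneg (abs_nonneg (g t))
        (show (0:ℝ) ≤ z + 2 * Real.sin t by nlinarith [Real.neg_one_le_sin t])]
  · exact (continuous_const.mul hg.abs).intervalIntegrable a b
  · refine Filter.Eventually.of_forall (fun t _ => ?_)
    have h0 : Filter.Tendsto (fun z : ℝ => g t - g t * Real.sin t / (z + Real.sin t))
        Filter.atTop (nhds (g t - 0)) := by
      exact tendsto_const_nhds.sub (Filter.Tendsto.div_atTop tendsto_const_nhds
        (tendsto_atTop_add_const_right Filter.atTop _ tendsto_id))
    rw [sub_zero] at h0
    refine h0.congr' ?_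
    filter_upwards [eventually_ge_atTop (2:ℝ)] with z hz
    have h1 := sin_denom_pos hz t
    field_simp
    ring

theorem stmt_1 (θ x : ℝ) (hθ : θ ∈ Set.Ioo 0 (Real.pi / 2)) (hx : 0 < x) :
    Filter.Tendsto (fun z : ℝ => (z / x) * growthDrift θ x z) Filter.atTop
      (nhds (Real.cos θ / θ)) := by
  obtain ⟨hθ0, hθ2⟩ := hθ
  set a := Real.arctan x with ha
  set g1 : ℝ → ℝ := fun α => Real.cos α - x * Real.sin α with hg1
  set g2 : ℝ → ℝ := fun α => -Real.cos α - x * Real.sin α with hg2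
  have hg1c : Continuous g1 := Real.continuous_cos.sub (continuous_const.mul Real.continuous_sin)
  have hg2c : Continuous g2 :=
    (Real.continuous_cos.neg).sub (continuous_const.mul Real.continuous_sin)
  have hL1 : (∫ α in (-a)..θ, g1 α) = Real.sin θ + x * Real.cos θ + Real.sin a - x * Real.cos a := by
    have h : (∫ α in (-a)..θ, g1 α)
        = (∫ α in (-a)..θ, Real.cos α) - ∫ α in (-a)..θ, x * Real.sin α :=
      intervalIntegral.integral_sub (Real.continuous_cos.intervalIntegrable _ _)
        ((continuous_const.mul Real.continuous_sin).intervalIntegrable _ _)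
    rw [h, intervalIntegral.integral_const_mul, integral_cos, integral_sin,
      Real.sin_neg, Real.cos_neg]
    ring
  have hL2 : (∫ α in a..θ, g2 α) = -Real.sin θ + x * Real.cos θ + Real.sin a - x * Real.cos a := by
    have h : (∫ α in a..θ, g2 α)
        = (∫ α in a..θ, -Real.cos α) - ∫ α in a..θ, x * Real.sin α :=
      intervalIntegral.integral_sub (Real.continuous_cos.neg.intervalIntegrable _ _)
        ((continuous_const.mul Real.continuous_sin).intervalIntegrable _ _)
    rw [h, intervalIntegral.integral_neg, intervalIntegral.integral_const_mul,
      integral_cos, integral_sin]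
    ring
  have hsa : Real.sin a - x * Real.cos a = 0 := by
    rw [ha, Real.sin_arctan, Real.cos_arctan]
    ring
  have key : Filter.Tendsto
      (fun z : ℝ => (1 / (2 * θ * x)) *
        ((∫ α in (-a)..θ, z * g1 α / (z + Real.sin α)) +
         (∫ α in a..θ, z * g2 α / (z + Real.sin α))))
      Filter.atTop
      (nhds ((1 / (2 * θ * x)) * ((∫ α in (-a)..θ, g1 α) + (∫ α in a..θ, g2 α)))) := by
    exact ((aux_tendsto g1 hg1c (-a) θ).add (aux_tendsto g2 hg2c a θ)).const_mul _
  have hval : (1 / (2 * θ * x)) * ((∫ α in (-a)..θ, g1 α) + (∫ α in a..θ, g2 α))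
      = Real.cos θ / θ := by
    rw [hL1, hL2]
    have hθ0' : θ ≠ 0 := ne_of_gt hθ0
    have hx' : x ≠ 0 := ne_of_gt hx
    field_simp
    nlinarith [hsa]
  rw [← hval]
  refine key.congr' ?_
  filter_upwards [eventually_ge_atTop (2:ℝ)] with z hz
  have hI1 : (∫ α in (-a)..θ, z * g1 α / (z + Real.sin α))
      = z * ∫ α in (-a)..θ, ((x * z + Real.cos α) / (z + Real.sin α) - x) := by
    rw [← intervalIntegral.integral_const_mul]
    refine intervalIntegral.integral_congr (fun α _ => ?_)
    have h1 := (sin_denom_pos hz α).ne'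
    field_simp [hg1]
    simp only [hg1]; ring
  have hI2 : (∫ α in a..θ, z * g2 α / (z + Real.sin α))
      = z * ∫ α in a..θ, ((x * z - Real.cos α) / (z + Real.sin α) - x) := by
    rw [← intervalIntegral.integral_const_mul]
    refine intervalIntegral.integral_congr (fun α _ => ?_)
    have h1 := (sin_denom_pos hz α).ne'
    field_simp [hg2]
    simp only [hg2]; ring
  rw [hI1, hI2, growthDrift]
  have hθ0' : θ ≠ 0 := ne_of_gt hθ0
  have hx' : x ≠ 0 := ne_of_gt hx
  field_simp
  ring
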